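/- Every locally finite Borel graph H on a standard Borel space admits a Borel proper coloring c : V → ℕ (adjacent vertices receive distinct colors). -/

import Mathlib

open Set Function MeasureTheory PiNat

namespace BorelColoringProof

/-- A countable family of sets admits Borel envelopes with empty intersection. -/
def SepEmpty {α : Type*} [MeasurableSpace α] (S : ℕ → Set α) : Prop :=
  ∃ C : ℕ → Set α, (∀ n, S n ⊆ C n) ∧ (∀ n, MeasurableSet (C n)) ∧ (⋂ n, C n) = ∅

/-- The key refinement step: if all simultaneous one-letter refinements of the first `m+1`
cylinders are separable-to-empty, then so is the original family. -/
lemma sepEmpty_step {α : Type*} [MeasurableSpace α] (f : ℕ → (ℕ → ℕ) → α)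
    (m : ℕ) (x : ℕ → ℕ → ℕ)
    (H : ∀ x' : ℕ → ℕ → ℕ, (∀ n, x' n ∈ cylinder (x n) (m - n)) →
      SepEmpty (fun n => f n '' cylinder (x' n) (m + 1 - n))) :
    SepEmpty (fun n => f n '' cylinder (x n) (m - n)) := by
  classical
  set x' : (Fin (m + 1) → ℕ) → ℕ → ℕ → ℕ := fun ψ n =>
    if h : n < m + 1 then update (x n) (m - n) (ψ ⟨n, h⟩) else x n with hx'
  have hmem : ∀ ψ n, x' ψ n ∈ cylinder (x n) (m - n) := by
    intro ψ n
    by_cases h : n < m + 1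
    · simp only [hx', dif_pos h]
      exact update_mem_cylinder _ _ _
    · simp only [hx', dif_neg h]
      simp [mem_cylinder_iff]
  choose C hCsub hCmeas hCempty using fun ψ : Fin (m + 1) → ℕ => H (x' ψ) (hmem ψ)
  refine ⟨fun n => if h : n < m + 1 then
      ⋃ i : ℕ, ⋂ ψ : {ψ : Fin (m + 1) → ℕ // ψ ⟨n, h⟩ = i}, C ψ.1 n
    else ⋂ ψ : Fin (m + 1) → ℕ, C ψ n, ?_, ?_, ?_⟩
  · intro n
    by_cases h : n < m + 1
    · simp only [dif_pos h]
      have hsub : m + 1 - n = (m - n) + 1 := by omega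
      rw [← iUnion_cylinder_update (x n) (m - n), image_iUnion]
      refine iUnion_subset fun i => ?_
      refine subset_iUnion_of_subset i (subset_iInter fun ψ => ?_)
      have hx'ψ : x' ψ.1 n = update (x n) (m - n) i := by
        simp only [hx', dif_pos h, ψ.2]
      have := hCsub ψ.1 n
      simp only [hx'ψ, hsub] at this
      exact this
    · simp only [dif_neg h]
      refine subset_iInter fun ψ => ?_
      have hx'ψ : x' ψ n = x n := by simp only [hx', dif_neg h]
      have h0 : m - n = 0 := by omega
      have h0' : m + 1 - n = 0 := by omega
      have := hCsub ψ n
      simp only [hx'ψ, h0'] at this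
      rw [h0]
      exact this
  · intro n
    by_cases h : n < m + 1
    · simp only [dif_pos h]
      exact MeasurableSet.iUnion fun i => MeasurableSet.iInter fun ψ => hCmeas ψ.1 n
    · simp only [dif_neg h]
      exact MeasurableSet.iInter fun ψ => hCmeas ψ n
  · rw [eq_empty_iff_forall_notMem]
    intro z hz
    rw [mem_iInter] at hz
    have hsel : ∀ j : Fin (m + 1), ∃ i : ℕ,
        z ∈ ⋂ ψ : {ψ : Fin (m + 1) → ℕ // ψ j = i}, C ψ.1 j := by
      intro j
      have := hz (j : ℕ)
      rw [dif_pos j.isLt] at this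
      rw [mem_iUnion] at this
      obtain ⟨i, hi⟩ := this
      exact ⟨i, by convert hi using 3⟩
    choose I hI using hsel
    have hzI : z ∈ ⋂ n, C I n := by
      rw [mem_iInter]
      intro n
      by_cases h : n < m + 1
      · have := hI ⟨n, h⟩
        rw [mem_iInter] at this
        exact this ⟨I, rfl⟩
      · have := hz n
        rw [dif_neg h, mem_iInter] at this
        exact this I
    rw [hCempty I] at hzI
    exact hzI


/-- Novikov separation for ranges of continuous functions from Baire space. -/
theorem novikov_ranges {α : Type*} [TopologicalSpace α] [T2Space α] [MeasurableSpace α]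
    [OpensMeasurableSpace α] (f : ℕ → (ℕ → ℕ) → α) (hf : ∀ n, Continuous (f n))
    (h : (⋂ n, range (f n)) = ∅) : SepEmpty (fun n => range (f n)) := by
  by_contra hsep
  -- the starting configuration is "bad"
  have hsep0 : ¬ SepEmpty (fun n => f n '' cylinder ((fun _ _ => 0 : ℕ → ℕ → ℕ) n) (0 - n)) := by
    intro hc
    apply hsep
    have : ∀ n : ℕ, f n '' cylinder ((fun _ _ => (0:ℕ) : ℕ → ℕ → ℕ) n) (0 - n) = range (f n) := by
      intro n
      have : (0 : ℕ) - n = 0 := by omega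
      rw [this]
      simp [PiNat.cylinder]
    obtain ⟨C, h1, h2, h3⟩ := hc
    refine ⟨C, fun n z hz => h1 n ?_, h2, h3⟩
    show z ∈ f n '' cylinder ((fun _ _ => (0:ℕ) : ℕ → ℕ → ℕ) n) (0 - n)
    rw [this n]
    exact hz
  -- the set of bad configurations
  let A := {p : ℕ × (ℕ → ℕ → ℕ) //
      ¬ SepEmpty (fun n => f n '' cylinder (p.2 n) (p.1 - n))}
  have step : ∀ p : A, ∃ q : A, q.1.1 = p.1.1 + 1 ∧
      ∀ n, q.1.2 n ∈ cylinder (p.1.2 n) (p.1.1 - n) := by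
    rintro ⟨⟨m, x⟩, hp⟩
    have := sepEmpty_step f m x
    by_contra hq
    push_neg at hq
    apply hp
    apply this
    intro x' hx'
    by_contra hx'bad
    obtain ⟨n, hn⟩ := hq ⟨⟨m + 1, x'⟩, hx'bad⟩ rfl
    exact hn (hx' n)
  choose F hF1 hF2 using step
  let p0 : A := ⟨⟨0, fun _ _ => 0⟩, hsep0⟩
  let p : ℕ → A := fun k => F^[k] p0
  have prec : ∀ k, p (k + 1) = F (p k) := fun k => by
    simp only [p, Function.iterate_succ', Function.comp]
  have pfst : ∀ k, (p k).1.1 = k := by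
    intro k
    induction' k with k IH
    · rfl
    · rw [prec, hF1, IH]
  -- stabilization of coordinates
  have stab : ∀ n j k, n + j + 1 ≤ k → (p k).1.2 n j = (p (n + j + 1)).1.2 n j := by
    intro n j
    refine Nat.le_induction rfl ?_
    intro k hk IH
    rw [prec]
    have hcyl := hF2 (p k) n
    rw [mem_cylinder_iff] at hcyl
    rw [hcyl j (by rw [pfst]; omega), IH]
  set y : ℕ → ℕ → ℕ := fun n j => (p (n + j + 1)).1.2 n j with hy
  have M : ∀ k, ¬ SepEmpty (fun n => f n '' cylinder (y n) (k - n)) := by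
    intro k hc
    apply (p k).2
    have : ∀ n, cylinder ((p k).1.2 n) ((p k).1.1 - n) = cylinder (y n) (k - n) := by
      intro n
      rw [pfst]
      symm
      rw [← mem_cylinder_iff_eq, mem_cylinder_iff]
      intro j hj
      exact (stab n j k (by omega)).symm
    obtain ⟨C, h1, h2, h3⟩ := hc
    refine ⟨C, fun n z hz => h1 n ?_, h2, h3⟩
    show z ∈ f n '' cylinder (y n) (k - n)
    rw [← this n]
    exact hz
  -- the limit points must all coincide
  by_cases hxy : ∀ a b : ℕ, f a (y a) = f b (y b)
  · have : f 0 (y 0) ∈ ⋂ n, range (f n) := by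
      rw [mem_iInter]
      intro n
      rw [hxy 0 n]
      exact mem_range_self _
    rw [h] at this
    exact this
  · push_neg at hxy
    obtain ⟨a, b, hab⟩ := hxy
    have hne : a ≠ b := fun hab' => hab (by rw [hab'])
    obtain ⟨u, v, u_open, v_open, xu, yv, huv⟩ := t2_separation hab
    letI : MetricSpace (ℕ → ℕ) := PiNat.metricSpaceNatNat
    obtain ⟨εa, εapos, hεa⟩ : ∃ εa : ℝ, εa > 0 ∧ Metric.ball (y a) εa ⊆ f a ⁻¹' u := by
      apply Metric.mem_nhds_iff.1
      exact (hf a).continuousAt.preimage_mem_nhds (u_open.mem_nhds xu)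
    obtain ⟨εb, εbpos, hεb⟩ : ∃ εb : ℝ, εb > 0 ∧ Metric.ball (y b) εb ⊆ f b ⁻¹' v := by
      apply Metric.mem_nhds_iff.1
      exact (hf b).continuousAt.preimage_mem_nhds (v_open.mem_nhds yv)
    obtain ⟨n₀, hn₀⟩ : ∃ n₀ : ℕ, (1 / 2 : ℝ) ^ n₀ < min εa εb :=
      exists_pow_lt_of_lt_one (lt_min εapos εbpos) (by norm_num)
    set k := n₀ + max a b with hk
    have hcyla : f a '' cylinder (y a) (k - a) ⊆ u := by
      rw [image_subset_iff]
      refine Subset.trans ?_ hεa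
      intro z hz
      rw [mem_cylinder_iff_dist_le] at hz
      have : ((1:ℝ) / 2) ^ (k - a) ≤ (1 / 2 : ℝ) ^ n₀ :=
        pow_le_pow_of_le_one (by norm_num) (by norm_num) (by omega)
      calc dist z (y a) ≤ _ := hz
        _ ≤ (1 / 2 : ℝ) ^ n₀ := this
        _ < εa := lt_of_lt_of_le hn₀ (min_le_left _ _)
    have hcylb : f b '' cylinder (y b) (k - b) ⊆ v := by
      rw [image_subset_iff]
      refine Subset.trans ?_ hεb
      intro z hz
      rw [mem_cylinder_iff_dist_le] at hz
      have : ((1:ℝ) / 2) ^ (k - b) ≤ (1 / 2 : ℝ) ^ n₀ :=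
        pow_le_pow_of_le_one (by norm_num) (by norm_num) (by omega)
      calc dist z (y b) ≤ _ := hz
        _ ≤ (1 / 2 : ℝ) ^ n₀ := this
        _ < εb := lt_of_lt_of_le hn₀ (min_le_right _ _)
    apply M k
    classical
    refine ⟨fun n => if n = a then u else if n = b then v else univ, ?_, ?_, ?_⟩
    · intro n
      by_cases hna : n = a
      · subst hna; simp only [if_pos rfl]; exact hcyla
      · by_cases hnb : n = b
        · subst hnb; simp only [if_neg hna, if_pos rfl]; exact hcylb
        · simp [hna, hnb]
    · intro n
      show MeasurableSet (if n = a then u else if n = b then v else univ)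
      rcases eq_or_ne n a with rfl | hna
      · rw [if_pos rfl]; exact u_open.measurableSet
      · rcases eq_or_ne n b with rfl | hnb
        · rw [if_neg hna, if_pos rfl]; exact v_open.measurableSet
        · rw [if_neg hna, if_neg hnb]; exact MeasurableSet.univ
    · rw [eq_empty_iff_forall_notMem]
      intro z hz
      rw [mem_iInter] at hz
      have hza := hz a
      have hzb := hz b
      rw [if_pos rfl] at hza
      rw [if_neg (Ne.symm hne), if_pos rfl] at hzb
      exact (disjoint_left.1 huv) hza hzb

/-- **Novikov's separation theorem**: countably many analytic sets with empty intersection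
can be enlarged to Borel sets with empty intersection. -/
theorem novikov_sep {α : Type*} [TopologicalSpace α] [T2Space α] [MeasurableSpace α]
    [OpensMeasurableSpace α] {A : ℕ → Set α} (hA : ∀ n, AnalyticSet (A n))
    (h : (⋂ n, A n) = ∅) :
    ∃ C : ℕ → Set α, (∀ n, A n ⊆ C n) ∧ (∀ n, MeasurableSet (C n)) ∧ (⋂ n, C n) = ∅ := by
  classical
  by_cases hne : ∀ n, (A n).Nonempty
  · have hfex : ∀ n, ∃ f : (ℕ → ℕ) → α, Continuous f ∧ range f = A n := by
      intro n
      have han := hA n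
      rw [AnalyticSet] at han
      rcases han with h0 | ⟨f, hfc, hfr⟩
      · exact absurd h0 (hne n).ne_empty
      · exact ⟨f, hfc, hfr⟩
    choose f hfc hfr using hfex
    have := novikov_ranges f hfc (by simp only [hfr]; exact h)
    obtain ⟨C, h1, h2, h3⟩ := this
    exact ⟨C, fun n => by rw [← hfr n]; exact h1 n, h2, h3⟩
  · push_neg at hne
    obtain ⟨n₀, hn₀⟩ := hne
    refine ⟨fun n => if n = n₀ then ∅ else univ, ?_, ?_, ?_⟩
    · intro n
      by_cases hn : n = n₀
      · subst hn; simp [hn₀]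
      · simp [hn]
    · intro n
      by_cases hn : n = n₀ <;> simp [hn]
    · rw [eq_empty_iff_forall_notMem]
      intro z hz
      rw [mem_iInter] at hz
      have := hz n₀
      simp at this


/-- From a lower bound on `ncard`, extract an injective tuple. -/
lemma exists_inj_tuple {β : Type*} {s : Set β} (hs : s.Finite) {k : ℕ} (h : k ≤ s.ncard) :
    ∃ g : Fin k → β, Injective g ∧ ∀ i, g i ∈ s := by
  obtain ⟨t, hts, htcard⟩ := Set.exists_subset_card_eq h
  have htfin : t.Finite := hs.subset hts
  have : Nat.card t = k := by
    rw [← htcard]; exact (Nat.card_coe_set_eq t).symm ▸ rfl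
  have hfin : Finite t := htfin
  let eq := Finite.equivFinOfCardEq this
  refine ⟨fun i => (eq.symm i : t), ?_, ?_⟩
  · intro i j hij
    have := Subtype.val_injective hij
    exact eq.symm.injective this
  · intro i
    exact hts (eq.symm i).2

/-- Projection of a Borel set in `X × ℝ` all of whose sections have at most `k` points
is Borel. -/
theorem proj_meas_bounded :
    ∀ (k : ℕ) (X : Type) [MeasurableSpace X] [StandardBorelSpace X] (B : Set (X × ℝ)),
    MeasurableSet B → (∀ x, {y | (x, y) ∈ B}.Finite) →
    (∀ x, ({y | (x, y) ∈ B}).ncard ≤ k) → MeasurableSet (Prod.fst '' B) := by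
  intro k
  induction k with
  | zero =>
    intro X _ _ B hB hfin hcard
    have hBempty : B = ∅ := by
      rw [eq_empty_iff_forall_notMem]
      rintro ⟨x, y⟩ hxy
      have h0 : {y | (x, y) ∈ B}.ncard = 0 := Nat.le_zero.1 (hcard x)
      rw [Set.ncard_eq_zero (hfin x)] at h0
      rw [eq_empty_iff_forall_notMem] at h0
      exact h0 y hxy
    rw [hBempty]
    simp
  | succ k IH =>
    intro X _ _ B hB hfin hcard
    set Bhat : Set ((X × ℝ) × ℝ) :=
      (Prod.fst ⁻¹' B) ∩ ((fun q : (X × ℝ) × ℝ => (q.1.1, q.2)) ⁻¹' B) ∩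
        {q : (X × ℝ) × ℝ | q.1.2 < q.2} with hBhatdef
    have hBhatm : MeasurableSet Bhat := by
      refine MeasurableSet.inter (MeasurableSet.inter ?_ ?_) ?_
      · exact measurable_fst hB
      · exact (Measurable.prodMk (measurable_fst.fst) measurable_snd) hB
      · exact measurableSet_lt (measurable_fst.snd) measurable_snd
    have hsec : ∀ p : X × ℝ, {y | (p, y) ∈ Bhat} ⊆ {y | (p.1, y) ∈ B} := by
      rintro p y ⟨⟨-, h2⟩, -⟩
      exact h2
    have hfin' : ∀ p : X × ℝ, {y | (p, y) ∈ Bhat}.Finite :=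
      fun p => (hfin p.1).subset (hsec p)
    have hcard' : ∀ p : X × ℝ, ({y | (p, y) ∈ Bhat}).ncard ≤ k := by
      intro p
      by_cases hp : p ∈ B
      · have hsub : {y | (p, y) ∈ Bhat} ⊆ {y | (p.1, y) ∈ B} \ {p.2} := by
          rintro y ⟨⟨-, h2⟩, h3⟩
          have h3' : p.2 < y := h3
          refine ⟨h2, fun hy => ?_⟩
          rw [mem_singleton_iff] at hy
          rw [hy] at h3'
          exact lt_irrefl _ h3'
        have h1 : ({y | (p, y) ∈ Bhat}).ncard ≤ ({y | (p.1, y) ∈ B} \ {p.2}).ncard :=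
          Set.ncard_le_ncard hsub (hfin p.1).diff
        have hp2 : p.2 ∈ {y | (p.1, y) ∈ B} := by
          show (p.1, p.2) ∈ B
          rwa [Prod.mk.eta]
        have h2 : ({y | (p.1, y) ∈ B} \ {p.2}).ncard = ({y | (p.1, y) ∈ B}).ncard - 1 :=
          Set.ncard_diff_singleton_of_mem hp2
        have h3 := hcard p.1
        omega
      · have : {y | (p, y) ∈ Bhat} = ∅ := by
          rw [eq_empty_iff_forall_notMem]
          rintro y ⟨⟨h1, -⟩, -⟩
          exact hp h1
        simp [this]
    have hS : MeasurableSet (Prod.fst '' Bhat) := IH (X × ℝ) Bhat hBhatm hfin' hcard'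
    set M := B \ (Prod.fst '' Bhat) with hM
    have hMm : MeasurableSet M := hB.diff hS
    have hinj : InjOn Prod.fst M := by
      rintro ⟨x, y₁⟩ hp ⟨x', y₂⟩ hq (h : x = x')
      subst h
      rcases lt_trichotomy y₁ y₂ with hlt | heq | hgt
      · exfalso
        apply hp.2
        refine ⟨((x, y₁), y₂), ⟨⟨hp.1, ?_⟩, hlt⟩, rfl⟩
        exact hq.1
      · rw [heq]
      · exfalso
        apply hq.2
        refine ⟨((x, y₂), y₁), ⟨⟨hq.1, ?_⟩, hgt⟩, rfl⟩
        exact hp.1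
    have himg : Prod.fst '' B = Prod.fst '' M := by
      apply Subset.antisymm
      · rintro x ⟨⟨x', y⟩, hxy, rfl⟩
        obtain ⟨b, hbmem, hbmax⟩ :=
          Set.exists_max_image {y | (x', y) ∈ B} id (hfin x') ⟨y, hxy⟩
        refine ⟨(x', b), ⟨hbmem, ?_⟩, rfl⟩
        rintro ⟨q, ⟨⟨hB1, hB2⟩, hlt⟩, heq⟩
        have h1 : q.1.1 = x' := by rw [heq]
        have h2 : q.1.2 = b := by rw [heq]
        have hq2 : q.2 ∈ {y | (x', y) ∈ B} := by
          show (x', q.2) ∈ B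
          rw [← h1]
          exact hB2
        have hlt' : b < q.2 := by rw [← h2]; exact hlt
        exact lt_irrefl _ (lt_of_le_of_lt (hbmax _ hq2) hlt')
      · exact image_mono (diff_subset)
    rw [himg]
    exact hMm.image_of_measurable_injOn measurable_fst hinj

/-- **Luzin–Novikov (finite sections)**: projection of a Borel subset of `X × ℝ` with all
sections finite is Borel. -/
theorem proj_meas {X : Type} [MeasurableSpace X] [StandardBorelSpace X]
    (B : Set (X × ℝ)) (hB : MeasurableSet B) (hfin : ∀ x, {y | (x, y) ∈ B}.Finite) :
    MeasurableSet (Prod.fst '' B) := by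
  letI := upgradeStandardBorel X
  classical
  set S : ℕ → Set X := fun k => {x | ∃ g : Fin k → ℝ, Injective g ∧ ∀ i, (x, g i) ∈ B}
    with hSdef
  have hSanal : ∀ k, AnalyticSet (S k) := by
    intro k
    have himg : S k =
        Prod.fst '' {p : X × (Fin k → ℝ) | Injective p.2 ∧ ∀ i, (p.1, p.2 i) ∈ B} := by
      ext x
      constructor
      · rintro ⟨g, hg, hgB⟩
        exact ⟨(x, g), ⟨hg, hgB⟩, rfl⟩
      · rintro ⟨⟨x', g⟩, ⟨hg, hgB⟩, rfl⟩
        exact ⟨g, hg, hgB⟩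
    rw [himg]
    have hmeas : MeasurableSet {p : X × (Fin k → ℝ) | Injective p.2 ∧ ∀ i, (p.1, p.2 i) ∈ B} := by
      have h1 : MeasurableSet {p : X × (Fin k → ℝ) | Injective p.2} := by
        have : {p : X × (Fin k → ℝ) | Injective p.2} =
            ⋂ (i : Fin k), ⋂ (j : Fin k), {p : X × (Fin k → ℝ) | p.2 i = p.2 j → i = j} := by
          ext p
          simp only [mem_iInter, mem_setOf_eq]
          exact ⟨fun h i j => fun hij => h hij, fun h a b hab => h a b hab⟩
        rw [this]
        refine MeasurableSet.iInter fun i => MeasurableSet.iInter fun j => ?_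
        by_cases hij : i = j
        · subst hij
          have : {p : X × (Fin k → ℝ) | p.2 i = p.2 i → i = i} = univ := by
            ext p; simp
          rw [this]; exact MeasurableSet.univ
        · have : {p : X × (Fin k → ℝ) | p.2 i = p.2 j → i = j} =
              {p : X × (Fin k → ℝ) | p.2 i = p.2 j}ᶜ := by
            ext p
            simp only [mem_setOf_eq, mem_compl_iff]
            exact ⟨fun h hh => hij (h hh), fun h hh => absurd hh h⟩
          rw [this]
          exact (measurableSet_eq_fun ((measurable_pi_apply i).comp measurable_snd)
            ((measurable_pi_apply j).comp measurable_snd)).compl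
      have h2 : MeasurableSet {p : X × (Fin k → ℝ) | ∀ i, (p.1, p.2 i) ∈ B} := by
        have : {p : X × (Fin k → ℝ) | ∀ i, (p.1, p.2 i) ∈ B} =
            ⋂ i : Fin k, (fun p : X × (Fin k → ℝ) => (p.1, p.2 i)) ⁻¹' B := by
          ext p; simp [mem_iInter]
        rw [this]
        refine MeasurableSet.iInter fun i => ?_
        exact (measurable_fst.prodMk ((measurable_pi_apply i).comp measurable_snd)) hB
      exact h1.inter h2
    exact hmeas.analyticSet_image measurable_fst
  have hScap : (⋂ k, S k) = ∅ := by
    rw [eq_empty_iff_forall_notMem]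
    intro x hx
    rw [mem_iInter] at hx
    obtain ⟨g, hginj, hgB⟩ := hx (({y | (x, y) ∈ B}).ncard + 1)
    have hsub : range g ⊆ {y | (x, y) ∈ B} := by
      rintro _ ⟨i, rfl⟩; exact hgB i
    have h1 : (range g).ncard = ({y | (x, y) ∈ B}).ncard + 1 := by
      rw [← image_univ, Set.ncard_image_of_injective _ hginj, Set.ncard_univ]
      simp
    have h2 := Set.ncard_le_ncard hsub (hfin x)
    omega
  obtain ⟨C, hC1, hC2, hC3⟩ := novikov_sep hSanal hScap
  set T : ℕ → Set X := fun k => ⋂ (j : ℕ) (_ : j ≤ k), C j with hTdef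
  have hTm : ∀ k, MeasurableSet (T k) :=
    fun k => MeasurableSet.iInter fun j => MeasurableSet.iInter fun _ => hC2 j
  set D : ℕ → Set X := fun k => T k \ T (k + 1) with hDdef
  have hDm : ∀ k, MeasurableSet (D k) := fun k => (hTm k).diff (hTm (k + 1))
  have hDcard : ∀ k x, x ∈ D k → ({y | (x, y) ∈ B}).ncard ≤ k := by
    intro k x hx
    by_contra hgt
    push_neg at hgt
    have hSx : x ∈ S (k + 1) := by
      obtain ⟨g, hg, hgs⟩ := exists_inj_tuple (hfin x) hgt
      exact ⟨g, hg, hgs⟩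
    have hCx : x ∈ C (k + 1) := hC1 _ hSx
    apply hx.2
    rw [hTdef]
    simp only [mem_iInter]
    intro j hj
    rcases Nat.lt_or_ge j (k + 1) with hj' | hj'
    · exact mem_iInter.1 (mem_iInter.1 hx.1 j) (by omega)
    · have : j = k + 1 := by omega
      rw [this]
      exact hCx
  have hDcover : ∀ x, ∃ k, x ∈ D k := by
    intro x
    have hT0 : x ∈ T 0 := by
      rw [hTdef]
      simp only [mem_iInter]
      intro j hj
      have : j = 0 := by omega
      rw [this]
      apply hC1 0
      exact ⟨fun i => i.elim0, fun i => i.elim0, fun i => i.elim0⟩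
    have hnot : ∃ j, x ∉ T j := by
      by_contra hall
      push_neg at hall
      have : x ∈ ⋂ n, C n := by
        rw [mem_iInter]
        intro n
        have := hall n
        rw [hTdef] at this
        exact mem_iInter.1 (mem_iInter.1 this n) le_rfl
      rw [hC3] at this
      exact this
    -- take the least such j
    let N := Nat.find hnot
    have hN : x ∉ T N := Nat.find_spec hnot
    have hNpos : N ≠ 0 := fun h => (h ▸ hN) hT0
    refine ⟨N - 1, ?_, ?_⟩
    · have := Nat.find_min hnot (m := N - 1) (by omega)
      simpa using this
    · have h2 : N - 1 + 1 = N := by omega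
      rw [h2]
      exact hN
  have hsplit : Prod.fst '' B = ⋃ k, Prod.fst '' (B ∩ (D k ×ˢ (univ : Set ℝ))) := by
    apply Subset.antisymm
    · rintro x ⟨⟨x', y⟩, hxy, rfl⟩
      obtain ⟨k, hk⟩ := hDcover x'
      exact mem_iUnion.2 ⟨k, ⟨(x', y), ⟨hxy, hk, trivial⟩, rfl⟩⟩
    · exact iUnion_subset fun k => image_mono inter_subset_left
  rw [hsplit]
  refine MeasurableSet.iUnion fun k => ?_
  refine proj_meas_bounded k X _ ?_ ?_ ?_
  · exact hB.inter ((hDm k).prod MeasurableSet.univ)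
  · intro x
    exact (hfin x).subset fun y hy => hy.1
  · intro x
    by_cases hx : x ∈ D k
    · refine le_trans (Set.ncard_le_ncard (fun y hy => hy.1) (hfin x)) (hDcard k x hx)
    · have : {y | (x, y) ∈ B ∩ (D k ×ˢ (univ : Set ℝ))} = ∅ := by
        rw [eq_empty_iff_forall_notMem]
        rintro y ⟨-, hy, -⟩
        exact hx hy
      rw [this]
      simp


/-- Around any point not in a finite set, there is a rational interval avoiding the set. -/
lemma exists_isolating {F : Set ℝ} (hF : F.Finite) {z : ℝ} (hz : z ∉ F) :
    ∃ a b : ℚ, (a : ℝ) < z ∧ z < (b : ℝ) ∧ ∀ w ∈ F, w ∉ Ioo ((a : ℝ)) ((b : ℝ)) := by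
  by_cases hFne : F.Nonempty
  · obtain ⟨w₀, hw₀F, hw₀min⟩ := Set.exists_min_image F (fun w => |w - z|) hF hFne
    have hw₀z : w₀ ≠ z := fun h => hz (h ▸ hw₀F)
    set ε := |w₀ - z| with hε
    have hεpos : 0 < ε := abs_pos.2 (sub_ne_zero.2 hw₀z)
    obtain ⟨a, ha1, ha2⟩ := exists_rat_btwn (show z - ε < z by linarith)
    obtain ⟨b, hb1, hb2⟩ := exists_rat_btwn (show z < z + ε by linarith)
    refine ⟨a, b, ha2, hb1, ?_⟩
    intro w hwF ⟨hw1, hw2⟩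
    have h1 : |w - z| < ε := by
      rw [abs_lt]
      constructor <;> [linarith; linarith]
    have h2 : ε ≤ |w - z| := hw₀min w hwF
    linarith
  · obtain ⟨a, ha1, ha2⟩ := exists_rat_btwn (show z - 1 < z by linarith)
    obtain ⟨b, hb1, hb2⟩ := exists_rat_btwn (show z < z + 1 by linarith)
    refine ⟨a, b, ha2, hb1, ?_⟩
    intro w hwF
    exact absurd ⟨w, hwF⟩ hFne

end BorelColoringProof

open Set Function MeasureTheory BorelColoringProof

/-- every locally finite Borel graph `H` on a standard Borel space `V`
admits a Borel proper coloring `c : V → ℕ` (adjacent vertices receive distinct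
colors). -/
theorem exists_borel_proper_coloring (V : Type) [MeasurableSpace V]
    [StandardBorelSpace V] (H : Set (V × V))
    (hBorel : MeasurableSet H)
    (hsym : ∀ u v : V, (u, v) ∈ H → (v, u) ∈ H)
    (hirr : ∀ v : V, (v, v) ∉ H)
    (hlf : ∀ v : V, {u : V | (v, u) ∈ H}.Finite) :
    ∃ c : V → ℕ, Measurable c ∧ ∀ u v : V, (u, v) ∈ H → c u ≠ c v := by
  classical
  obtain ⟨e, he⟩ := exists_measurableEmbedding_real V
  obtain ⟨q, hq⟩ := exists_surjective_nat (ℚ × ℚ)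
  set B : Set (ℝ × ℝ) := (fun p : V × V => (e p.1, e p.2)) '' H with hBdef
  have hBm : MeasurableSet B := (he.prodMap he).measurableSet_image.2 hBorel
  have hBmem : ∀ v u : V, ((e v, e u) ∈ B ↔ (v, u) ∈ H) := by
    intro v u
    constructor
    · rintro ⟨⟨v', u'⟩, hvu, heq⟩
      have h1 : e v' = e v := congrArg Prod.fst heq
      have h2 : e u' = e u := congrArg Prod.snd heq
      rwa [he.injective h1, he.injective h2] at hvu
    · intro hvu
      exact ⟨(v, u), hvu, rfl⟩
  have hBsec : ∀ x : ℝ, {y | (x, y) ∈ B}.Finite := by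
    intro x
    by_cases hx : ∃ v, e v = x
    · obtain ⟨v, rfl⟩ := hx
      have hsub : {y | (e v, y) ∈ B} ⊆ e '' {u | (v, u) ∈ H} := by
        rintro y ⟨⟨v', u⟩, hvu, heq⟩
        have h1 : e v' = e v := congrArg Prod.fst heq
        have h2 : e u = y := congrArg Prod.snd heq
        exact ⟨u, by rwa [he.injective h1] at hvu, h2⟩
      exact ((hlf v).image e).subset hsub
    · have : {y | (x, y) ∈ B} = ∅ := by
        rw [eq_empty_iff_forall_notMem]
        rintro y ⟨⟨v', u⟩, -, heq⟩
        exact hx ⟨v', congrArg Prod.fst heq⟩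
      rw [this]
      exact finite_empty
  set I : ℕ → Set ℝ := fun n => Ioo (((q n).1 : ℝ)) (((q n).2 : ℝ)) with hIdef
  set P : ℕ → Set V := fun n => {v | ∃ u, (v, u) ∈ H ∧ e u ∈ I n} with hPdef
  have hPm : ∀ n, MeasurableSet (P n) := by
    intro n
    have hview : P n = e ⁻¹' (Prod.fst '' (B ∩ ((univ : Set ℝ) ×ˢ I n))) := by
      ext v
      constructor
      · rintro ⟨u, hu, huI⟩
        exact ⟨(e v, e u), ⟨(hBmem v u).2 hu, trivial, huI⟩, rfl⟩
      · rintro ⟨p, ⟨hpB, -, hpI⟩, hpx⟩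
        obtain ⟨⟨v', u⟩, hvu, heq⟩ := hpB
        have h1 : e v' = p.1 := congrArg Prod.fst heq
        have h2 : e u = p.2 := congrArg Prod.snd heq
        have hv' : v' = v := he.injective (by rw [h1, hpx])
        refine ⟨u, by rwa [hv'] at hvu, by rwa [h2]⟩
    rw [hview]
    apply he.measurable
    apply proj_meas
    · exact hBm.inter (MeasurableSet.univ.prod measurableSet_Ioo)
    · intro x
      exact (hBsec x).subset fun y hy => hy.1
  set G : ℕ → Set V := fun n => (e ⁻¹' I n) ∩ (P n)ᶜ with hGdef
  have hGm : ∀ n, MeasurableSet (G n) :=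
    fun n => (he.measurable measurableSet_Ioo).inter (hPm n).compl
  have htotal : ∀ v, ∃ n, v ∈ G n := by
    intro v
    have hFfin : (e '' {u | (v, u) ∈ H}).Finite := (hlf v).image e
    have hzF : e v ∉ e '' {u | (v, u) ∈ H} := by
      rintro ⟨u, huH, hue⟩
      rw [he.injective hue] at huH
      exact hirr v huH
    obtain ⟨a, b, ha, hb, hiso⟩ := exists_isolating hFfin hzF
    obtain ⟨n, hn⟩ := hq (a, b)
    refine ⟨n, ?_, ?_⟩
    · show e v ∈ I n
      rw [hIdef]
      simp only [hn]
      exact ⟨ha, hb⟩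
    · intro hvP
      obtain ⟨u, huH, huI⟩ := hvP
      apply hiso (e u) ⟨u, huH, rfl⟩
      rw [hIdef] at huI
      simpa only [hn] using huI
  set c : V → ℕ := fun v => Nat.find (htotal v) with hcdef
  refine ⟨c, ?_, ?_⟩
  · apply measurable_to_countable'
    intro n
    have : c ⁻¹' {n} = G n ∩ ⋂ (m : ℕ) (_ : m < n), (G m)ᶜ := by
      ext v
      simp only [mem_preimage, mem_singleton_iff, mem_inter_iff, mem_iInter, mem_compl_iff,
        hcdef, Nat.find_eq_iff]
    rw [this]
    exact (hGm n).inter (MeasurableSet.iInter fun m => MeasurableSet.iInter fun _ => (hGm m).compl)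
  · intro u v huv hc
    have hu : u ∈ G (c u) := Nat.find_spec (htotal u)
    have hv : v ∈ G (c v) := Nat.find_spec (htotal v)
    rw [← hc] at hv
    exact hu.2 ⟨v, huv, hv.1⟩
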